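/- Let p be an odd prime, s a positive integer, and let F be a field of characteristic p containing GF(p^s). For all X, Y ∈ F, the polynomial identity X·Y^{p^s} − X^{p^s}·Y − (Y^{p^s} − Y) + (X^{p^s} − X) = (Y − X)(1 − X)(1 − Y) · ∏_{α ∈ GF(p^s), α ≠ 0, α ≠ −1} (1 + α·X − (α+1)·Y) holds. -/

import Mathlib

open Polynomial in
lemma helper_prod (F : Type*) [Field F] (q : ℕ) (hq : 2 ≤ q) (T : Finset F)
    (hT : ∀ α ∈ T, α ^ q = α) (hcard : T.card = q) (z : F) :
    ∏ α ∈ T, (z - α) = z ^ q - z := by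
  classical
  set Q : F[X] := X ^ q - X with hQ
  have hdeg : Q.natDegree = q := by
    have : (X : F[X]).natDegree < (X ^ q : F[X]).natDegree := by
      simp [Polynomial.natDegree_X_pow]; omega
    rw [hQ, Polynomial.natDegree_sub_eq_left_of_natDegree_lt this, Polynomial.natDegree_X_pow]
  have hmon : Q.Monic := by
    apply Polynomial.monic_X_pow_sub
    rw [Polynomial.degree_X]
    exact_mod_cast hq
  have hQne : Q ≠ 0 := hmon.ne_zero
  have hsub : T.val ≤ Q.roots := by
    rw [Multiset.le_iff_subset T.nodup]
    intro a ha
    rw [Polynomial.mem_roots hQne]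
    simp [hQ, Polynomial.IsRoot, hT a ha]
  have hcards : Q.roots.card = q := by
    have h1 : Q.roots.card ≤ q := hdeg ▸ Q.card_roots' 
    have h2 : q ≤ Q.roots.card := by
      have := Multiset.card_le_card hsub
      simpa [hcard] using this
    omega
  have hroots : Q.roots = T.val :=
    (Multiset.eq_of_le_of_card_le hsub (by simp [hcards, hcard])).symm
  have hsplits : Q.Splits := by
    rw [Polynomial.splits_iff_card_roots, hcards, hdeg]
  have heq := Polynomial.Splits.eq_prod_roots_of_monic hsplits hmon
  have := congrArg (Polynomial.eval z) heq
  simp only [hQ, hroots, Polynomial.eval_sub, Polynomial.eval_pow, Polynomial.eval_X,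
    Polynomial.eval_multiset_prod, Multiset.map_map] at this
  rw [this]
  rw [Finset.prod]
  congr 1
  rw [← hQ, hroots]
  simp

theorem stmt5 (p s : ℕ) (hp : p.Prime) (hpodd : Odd p) (hs : 0 < s)
    (F : Type*) [Field F] [CharP F p]
    (S : Finset F) (hS : ∀ α : F, α ∈ S ↔ (α ^ (p ^ s) = α ∧ α ≠ 0 ∧ α ≠ -1))
    (hScard : S.card = p ^ s - 2) :
    ∀ X Y : F,
      X * Y ^ (p ^ s) - X ^ (p ^ s) * Y - (Y ^ (p ^ s) - Y) + (X ^ (p ^ s) - X) =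
        (Y - X) * (1 - X) * (1 - Y) * ∏ α ∈ S, (1 + α * X - (α + 1) * Y) := by
  classical
  intro X Y
  set q := p ^ s with hqdef
  haveI := Fact.mk hp
  have hq3 : 3 ≤ q := by
    have hp3 : 3 ≤ p := by
      have h2 : p ≠ 2 := by rintro rfl; simp [Nat.odd_iff] at hpodd
      have := hp.two_le; omega
    calc 3 ≤ p := hp3
    _ = p ^ 1 := (pow_one p).symm
    _ ≤ p ^ s := Nat.pow_le_pow_right (by omega) hs
  have hqodd : Odd q := hpodd.pow
  have hzne : (0 : F) ≠ -1 := by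
    intro h
    have : (1 : F) = 0 := by linear_combination h
    exact one_ne_zero this
  have h0S : (0 : F) ∉ S := fun h => ((hS 0).mp h).2.1 rfl
  have h1S : (-1 : F) ∉ S := fun h => ((hS (-1)).mp h).2.2 rfl
  set T : Finset F := insert 0 (insert (-1) S) with hTdef
  have hmemT : ∀ α : F, α ∈ T ↔ α ^ q = α := by
    intro α
    constructor
    · intro h
      simp only [hTdef, Finset.mem_insert] at h
      rcases h with rfl | rfl | h
      · rw [zero_pow (by omega : q ≠ 0)]
      · rw [hqodd.neg_one_pow]
      · exact ((hS α).mp h).1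
    · intro h
      simp only [hTdef, Finset.mem_insert]
      by_cases h0 : α = 0
      · left; exact h0
      right
      by_cases h1 : α = -1
      · left; exact h1
      right; exact (hS α).mpr ⟨h, h0, h1⟩
  have hTcard : T.card = q := by
    rw [hTdef, Finset.card_insert_of_notMem, Finset.card_insert_of_notMem h1S, hScard]
    · omega
    · simp only [Finset.mem_insert]
      push_neg
      exact ⟨hzne, h0S⟩
  -- negation version of the product lemma
  have hprodneg : ∀ z : F, ∏ α ∈ T, (z + α) = z ^ q - z := by
    intro z
    have hbij : ∏ α ∈ T, (z + α) = ∏ α ∈ T, (z - α) := by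
      apply Finset.prod_nbij' (fun α => -α) (fun α => -α)
      · intro a ha
        rw [hmemT] at ha ⊢
        rw [hqodd.neg_pow, ha]
      · intro a ha
        rw [hmemT] at ha ⊢
        rw [hqodd.neg_pow, ha]
      · intro a _; simp
      · intro a _; simp
      · intro a _; ring
    rw [hbij]
    exact helper_prod F q (by omega) T (fun α hα => (hmemT α).mp hα) hTcard z
  by_cases hd : X - Y = 0
  · have hXY : X = Y := by linear_combination hd
    subst hXY
    ring
  · set d := X - Y with hddef
    set w := (1 - Y) / d with hwdef
    have hfac : (1 - X) * (1 - Y) * ∏ α ∈ S, (1 + α * X - (α + 1) * Y)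
        = ∏ α ∈ T, (1 + α * X - (α + 1) * Y) := by
      rw [hTdef, Finset.prod_insert, Finset.prod_insert h1S]
      · ring
      · simp only [Finset.mem_insert]; push_neg; exact ⟨hzne, h0S⟩
    have hfac2 : ∏ α ∈ T, (1 + α * X - (α + 1) * Y) = ∏ α ∈ T, (d * (w + α)) := by
      apply Finset.prod_congr rfl
      intro α _
      rw [hwdef]
      field_simp
      rw [hddef]
      ring
    have hfac3 : ∏ α ∈ T, (d * (w + α)) = d ^ q * (w ^ q - w) := by
      rw [Finset.prod_mul_distrib, Finset.prod_const, hTcard, hprodneg w]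
    have hdw : d * w = 1 - Y := by rw [hwdef]; field_simp
    have hdwq : d ^ q * w ^ q = (1 - Y) ^ q := by rw [← mul_pow, hdw]
    have h1Yq : (1 - Y) ^ q = 1 - Y ^ q := by
      rw [hqdef, sub_pow_char_pow, one_pow]
    have hXYq : d ^ q = X ^ q - Y ^ q := by
      rw [hddef, hqdef, sub_pow_char_pow]
    calc X * Y ^ q - X ^ q * Y - (Y ^ q - Y) + (X ^ q - X)
        = (Y - X) * ((1 - X) * (1 - Y) * ∏ α ∈ S, (1 + α * X - (α + 1) * Y)) := by
          rw [hfac, hfac2, hfac3]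
          have : d ^ q * (w ^ q - w) = (1 - Y ^ q) - (X ^ q - Y ^ q) * w := by
            rw [mul_sub, hdwq, h1Yq, hXYq]
          rw [this]
          rw [hwdef]
          field_simp
          ring
      _ = (Y - X) * (1 - X) * (1 - Y) * ∏ α ∈ S, (1 + α * X - (α + 1) * Y) := by ring
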